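/- arXiv:0812.3222 — 3 statements merged into one kernel-verified Lean document; each statement's English description precedes it below -/
import Mathlib

section
/- Let K be an algebraically closed field of characteristic different from 2 and 3, and let ω ∈ K be a primitive third root of unity. Let G = z₀⁶ + z₁⁶ + z₂⁶ − 2(z₀³z₁³ + z₁³z₂³ + z₀³z₂³) ∈ K[z₀, z₁, z₂]. Then the set of points p ∈ K³ \ {0} at which G and all three partial derivatives ∂G/∂z₀, ∂G/∂z₁, ∂G/∂z₂ vanish simultaneously is exactly the set of nonzero scalar multiples of the nine points (ω^i, 1, 0), (ω^j, 0, 1), and (0, ω^k, 1) with i, j, k ∈ {0, 1, 2}. (Thus the plane sextic curve C : G = 0 has exactly 9 singular points.) -/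
open MvPolynomial

/-- The sextic `G = z₀⁶ + z₁⁶ + z₂⁶ − 2(z₀³z₁³ + z₁³z₂³ + z₀³z₂³)`, with variables
`z₀ = X 0`, `z₁ = X 1`, `z₂ = X 2`. -/
noncomputable def Gpoly (K : Type*) [CommRing K] : MvPolynomial (Fin 3) K :=
  (X 0) ^ 6 + (X 1) ^ 6 + (X 2) ^ 6
    - 2 * ((X 0) ^ 3 * (X 1) ^ 3 + (X 1) ^ 3 * (X 2) ^ 3 + (X 0) ^ 3 * (X 2) ^ 3)

lemma cube_root_cases {K : Type*} [Field K] (ω x y : K)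
    (h1 : ω ^ 3 = 1) (hs : ω ^ 2 + ω + 1 = 0) (h : x ^ 3 = y ^ 3) :
    ∃ n : Fin 3, x = ω ^ (n : ℕ) * y := by
  have key : (x - y) * (x - ω * y) * (x - ω ^ 2 * y) = 0 := by
    linear_combination h + (x - y) * y ^ 2 * h1 + (x * y ^ 2 - x ^ 2 * y) * hs
  rcases mul_eq_zero.1 key with key | key
  · rcases mul_eq_zero.1 key with key | key
    · exact ⟨0, by simpa using sub_eq_zero.1 key⟩
    · exact ⟨1, by simpa using sub_eq_zero.1 key⟩
  · exact ⟨2, by simpa using sub_eq_zero.1 key⟩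

/-- Over an algebraically closed field `K` of characteristic `≠ 2, 3` containing a
primitive third root of unity `ω`, the common vanishing locus in `K³ \ {0}` of `G` and its
three partial derivatives consists exactly of the nonzero scalar multiples of the nine
points `(ωⁱ, 1, 0)`, `(ωʲ, 0, 1)` and `(0, ωᵏ, 1)` with `i, j, k ∈ {0, 1, 2}`:
the plane sextic `C : G = 0` has exactly nine singular points (its nine cusps). -/
theorem singular_locus_of_sextic (K : Type*) [Field K] [IsAlgClosed K]
    (h2 : (2 : K) ≠ 0) (h3 : (3 : K) ≠ 0) (ω : K) (hω : IsPrimitiveRoot ω 3)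
    (p : Fin 3 → K) (hp : p ≠ 0) :
    (eval p (Gpoly K) = 0 ∧ ∀ i : Fin 3, eval p (pderiv i (Gpoly K)) = 0) ↔
      ∃ lam : K, lam ≠ 0 ∧ ∃ n : Fin 3,
        p = lam • ![ω ^ (n : ℕ), 1, 0] ∨
        p = lam • ![ω ^ (n : ℕ), 0, 1] ∨
        p = lam • ![0, ω ^ (n : ℕ), 1] := by
  have h6 : (6 : K) ≠ 0 := by
    intro h; apply h2
    rcases mul_eq_zero.1 (show (2 : K) * 3 = 0 by linear_combination h) with h | h
    · exact h
    · exact absurd h h3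
  have hω3 : ω ^ 3 = 1 := hω.pow_eq_one
  have hω1 : ω ≠ 1 := by
    intro h; have := hω.dvd_of_pow_eq_one 1 (by simp [h]); omega
  have hωs : ω ^ 2 + ω + 1 = 0 := by
    rcases mul_eq_zero.1 (show (ω - 1) * (ω ^ 2 + ω + 1) = 0 by linear_combination hω3)
      with h | h
    · exact absurd (sub_eq_zero.1 h) hω1
    · exact h
  have hC2 : (2 : MvPolynomial (Fin 3) K) = C 2 := (map_ofNat C 2).symm
  have eG : ∀ q : Fin 3 → K, eval q (Gpoly K) =
      q 0 ^ 6 + q 1 ^ 6 + q 2 ^ 6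
        - 2 * (q 0 ^ 3 * q 1 ^ 3 + q 1 ^ 3 * q 2 ^ 3 + q 0 ^ 3 * q 2 ^ 3) := by
    intro q; simp [Gpoly]
  have e0 : ∀ q : Fin 3 → K,
      eval q (pderiv 0 (Gpoly K)) = 6 * q 0 ^ 2 * (q 0 ^ 3 - q 1 ^ 3 - q 2 ^ 3) := by
    intro q; simp [Gpoly, hC2, pderiv_X_self, pderiv_X_of_ne]; ring
  have e1 : ∀ q : Fin 3 → K,
      eval q (pderiv 1 (Gpoly K)) = 6 * q 1 ^ 2 * (q 1 ^ 3 - q 0 ^ 3 - q 2 ^ 3) := by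
    intro q; simp [Gpoly, hC2, pderiv_X_self, pderiv_X_of_ne]; ring
  have e2 : ∀ q : Fin 3 → K,
      eval q (pderiv 2 (Gpoly K)) = 6 * q 2 ^ 2 * (q 2 ^ 3 - q 0 ^ 3 - q 1 ^ 3) := by
    intro q; simp [Gpoly, hC2, pderiv_X_self, pderiv_X_of_ne]; ring
  have strip : ∀ x y z : K, 6 * x ^ 2 * (x ^ 3 - y ^ 3 - z ^ 3) = 0 →
      x = 0 ∨ x ^ 3 = y ^ 3 + z ^ 3 := by
    intro x y z h
    rcases mul_eq_zero.1 h with h | h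
    · rcases mul_eq_zero.1 h with h | h
      · exact absurd h h6
      · exact Or.inl (pow_eq_zero_iff (by norm_num) |>.1 h)
    · exact Or.inr (by linear_combination h)
  constructor
  · rintro ⟨hG, hD⟩
    have d0 := strip _ _ _ ((e0 p) ▸ hD 0)
    have d1 := strip _ _ _ ((e1 p) ▸ hD 1)
    have d2 := strip _ _ _ ((e2 p) ▸ hD 2)
    by_cases ha0 : p 0 = 0
    · by_cases hb0 : p 1 = 0
      · exfalso
        have hc0 : p 2 = 0 := by
          rcases d2 with h | h
          · exact h
          · exact pow_eq_zero_iff (n := 3) (by norm_num) |>.1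
              (by rw [h, ha0, hb0]; ring)
        exact hp (funext fun i => by fin_cases i <;> simpa [ha0, hb0, hc0])
      · have hbc : p 1 ^ 3 = p 2 ^ 3 := by
          rcases d1 with h | h
          · exact absurd h hb0
          · rw [h, ha0]; ring
        have hc0 : p 2 ≠ 0 := fun h => hb0
          (pow_eq_zero_iff (n := 3) (by norm_num) |>.1 (by rw [hbc, h]; ring))
        obtain ⟨n, hn⟩ := cube_root_cases ω (p 1) (p 2) hω3 hωs hbc
        refine ⟨p 2, hc0, n, Or.inr (Or.inr ?_)⟩
        funext i
        fin_cases i <;> simp [ha0, hn, mul_comm]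
    · have haa : p 0 ^ 3 = p 1 ^ 3 + p 2 ^ 3 := d0.resolve_left ha0
      by_cases hb0 : p 1 = 0
      · have hac : p 0 ^ 3 = p 2 ^ 3 := by rw [haa, hb0]; ring
        have hc0 : p 2 ≠ 0 := fun h => ha0
          (pow_eq_zero_iff (n := 3) (by norm_num) |>.1 (by rw [hac, h]; ring))
        obtain ⟨n, hn⟩ := cube_root_cases ω (p 0) (p 2) hω3 hωs hac
        refine ⟨p 2, hc0, n, Or.inr (Or.inl ?_)⟩
        funext i
        fin_cases i <;> simp [hb0, hn, mul_comm]
      · have hbb : p 1 ^ 3 = p 0 ^ 3 + p 2 ^ 3 := d1.resolve_left hb0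
        have hab : p 0 ^ 3 = p 1 ^ 3 := by
          rcases mul_eq_zero.1
            (show (2 : K) * (p 0 ^ 3 - p 1 ^ 3) = 0 by linear_combination haa - hbb)
            with h | h
          · exact absurd h h2
          · linear_combination h
        have hc0 : p 2 = 0 :=
          pow_eq_zero_iff (n := 3) (by norm_num) |>.1 (by linear_combination hab - haa)
        obtain ⟨n, hn⟩ := cube_root_cases ω (p 0) (p 1) hω3 hωs hab
        refine ⟨p 1, hb0, n, Or.inl ?_⟩
        funext i
        fin_cases i <;> simp [hc0, hn, mul_comm]
  · rintro ⟨lam, hlam, n, h | h | h⟩ <;> subst h <;>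
      have hu : (ω ^ (n : ℕ)) ^ 3 = 1 := by
        rw [← pow_mul, mul_comm, pow_mul, hω3, one_pow]
    · constructor
      · rw [eG]; simp only [Pi.smul_apply, smul_eq_mul, Matrix.cons_val_zero,
          Matrix.cons_val_one, Matrix.head_cons, Matrix.cons_val_two, Matrix.tail_cons]
        linear_combination lam ^ 6 * ((ω ^ (n : ℕ)) ^ 3 - 1) * hu
      · intro i
        fin_cases i
        · show eval _ (pderiv 0 (Gpoly K)) = 0
          rw [e0]; simp only [Pi.smul_apply, smul_eq_mul, Matrix.cons_val_zero,
            Matrix.cons_val_one, Matrix.head_cons, Matrix.cons_val_two, Matrix.tail_cons]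
          linear_combination 6 * lam ^ 5 * (ω ^ (n : ℕ)) ^ 2 * hu
        · show eval _ (pderiv 1 (Gpoly K)) = 0
          rw [e1]; simp only [Pi.smul_apply, smul_eq_mul, Matrix.cons_val_zero,
            Matrix.cons_val_one, Matrix.head_cons, Matrix.cons_val_two, Matrix.tail_cons]
          linear_combination (-(6 : K) * lam ^ 5) * hu
        · show eval _ (pderiv 2 (Gpoly K)) = 0
          rw [e2]; simp only [Pi.smul_apply, smul_eq_mul, Matrix.cons_val_zero,
            Matrix.cons_val_one, Matrix.head_cons, Matrix.cons_val_two, Matrix.tail_cons]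
          ring
    · constructor
      · rw [eG]; simp only [Pi.smul_apply, smul_eq_mul, Matrix.cons_val_zero,
          Matrix.cons_val_one, Matrix.head_cons, Matrix.cons_val_two, Matrix.tail_cons]
        linear_combination lam ^ 6 * ((ω ^ (n : ℕ)) ^ 3 - 1) * hu
      · intro i
        fin_cases i
        · show eval _ (pderiv 0 (Gpoly K)) = 0
          rw [e0]; simp only [Pi.smul_apply, smul_eq_mul, Matrix.cons_val_zero,
            Matrix.cons_val_one, Matrix.head_cons, Matrix.cons_val_two, Matrix.tail_cons]
          linear_combination 6 * lam ^ 5 * (ω ^ (n : ℕ)) ^ 2 * hu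
        · show eval _ (pderiv 1 (Gpoly K)) = 0
          rw [e1]; simp only [Pi.smul_apply, smul_eq_mul, Matrix.cons_val_zero,
            Matrix.cons_val_one, Matrix.head_cons, Matrix.cons_val_two, Matrix.tail_cons]
          ring
        · show eval _ (pderiv 2 (Gpoly K)) = 0
          rw [e2]; simp only [Pi.smul_apply, smul_eq_mul, Matrix.cons_val_zero,
            Matrix.cons_val_one, Matrix.head_cons, Matrix.cons_val_two, Matrix.tail_cons]
          linear_combination (-(6 : K) * lam ^ 5) * hu
    · constructor
      · rw [eG]; simp only [Pi.smul_apply, smul_eq_mul, Matrix.cons_val_zero,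
          Matrix.cons_val_one, Matrix.head_cons, Matrix.cons_val_two, Matrix.tail_cons]
        linear_combination lam ^ 6 * ((ω ^ (n : ℕ)) ^ 3 - 1) * hu
      · intro i
        fin_cases i
        · show eval _ (pderiv 0 (Gpoly K)) = 0
          rw [e0]; simp only [Pi.smul_apply, smul_eq_mul, Matrix.cons_val_zero,
            Matrix.cons_val_one, Matrix.head_cons, Matrix.cons_val_two, Matrix.tail_cons]
          ring
        · show eval _ (pderiv 1 (Gpoly K)) = 0
          rw [e1]; simp only [Pi.smul_apply, smul_eq_mul, Matrix.cons_val_zero,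
            Matrix.cons_val_one, Matrix.head_cons, Matrix.cons_val_two, Matrix.tail_cons]
          linear_combination 6 * lam ^ 5 * (ω ^ (n : ℕ)) ^ 2 * hu
        · show eval _ (pderiv 2 (Gpoly K)) = 0
          rw [e2]; simp only [Pi.smul_apply, smul_eq_mul, Matrix.cons_val_zero,
            Matrix.cons_val_one, Matrix.head_cons, Matrix.cons_val_two, Matrix.tail_cons]
          linear_combination (-(6 : K) * lam ^ 5) * hu
end

section
/- Let F be a finite field with q elements such that 3 divides q − 1. Then the number of quadruples (x, y, s, t) ∈ F⁴ satisfying t·y + x³ − s³ = 0 is exactly q³ + 2q² − 2q. -/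
open Finset Polynomial

section aux
variable {F : Type*} [Field F] [Fintype F] [DecidableEq F]

lemma sumT (y c : F) :
    (∑ t : F, if t * y = c then 1 else 0) =
      if y = 0 then (if c = 0 then Fintype.card F else 0) else 1 := by
  rcases eq_or_ne y 0 with hy | hy
  · subst hy
    simp only [mul_zero, if_pos rfl]
    rcases eq_or_ne c 0 with hc | hc
    · simp [eq_comm, hc, Finset.card_univ]
    · simp [eq_comm, hc]
  · rw [if_neg hy]
    have : ∀ t : F, (t * y = c) = (t = c / y) := fun t => by
      rw [eq_div_iff hy]
    simp only [this]
    simp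

lemma sumY (c : F) :
    (∑ y : F, ∑ t : F, if t * y = c then 1 else 0) =
      (if c = 0 then Fintype.card F else 0) + (Fintype.card F - 1) := by
  simp only [sumT]
  rw [← Finset.add_sum_erase _ _ (Finset.mem_univ (0 : F)), if_pos rfl]
  congr 1
  rw [Finset.sum_congr rfl (fun y hy => by
    rw [if_neg (Finset.mem_erase.mp hy).1]),
    Finset.sum_const, smul_eq_mul, mul_one, Finset.card_erase_of_mem (Finset.mem_univ _),
    Finset.card_univ]

lemma cubeRoots (h : 3 ∣ Fintype.card F - 1) :
    (univ.filter fun u : F => u ^ 3 = 1).card = 3 := by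
  obtain ⟨g, hg⟩ := IsCyclic.exists_ofOrder_eq_natCard (α := Fˣ)
  have hcard : Nat.card Fˣ = Fintype.card F - 1 := by
    rw [Nat.card_eq_fintype_card, Fintype.card_units]
  have hne : orderOf g ≠ 0 := by
    rw [hg, hcard]
    have := Fintype.one_lt_card (α := F)
    omega
  have hdvd : 3 ∣ orderOf g := by rw [hg, hcard]; exact h
  have hζ : orderOf (g ^ (orderOf g / 3)) = 3 := orderOf_pow_orderOf_div hne hdvd
  set ζu := g ^ (orderOf g / 3)
  have hprim : IsPrimitiveRoot (ζu : F) 3 := by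
    have := IsPrimitiveRoot.orderOf (ζu : F)
    rwa [orderOf_units, hζ] at this
  have hset : (univ.filter fun u : F => u ^ 3 = 1) = nthRootsFinset 3 (1 : F) := by
    ext x
    simp [Polynomial.mem_nthRootsFinset (by norm_num : 0 < 3) (1 : F)]
  rw [hset, hprim.card_nthRootsFinset]

lemma sumS (h : 3 ∣ Fintype.card F - 1) (x : F) :
    (∑ s : F, if s ^ 3 = x ^ 3 then (1 : ℕ) else 0) = if x = 0 then 1 else 3 := by
  rcases eq_or_ne x 0 with hx | hx
  · subst hx
    simp only [if_pos rfl, zero_pow (by norm_num : (3:ℕ) ≠ 0)]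
    have : ∀ s : F, (s ^ 3 = (0:F)) = (s = 0) := fun s =>
      propext (pow_eq_zero_iff (by norm_num))
    simp only [this]
    simp
  · rw [if_neg hx]
    calc (∑ s : F, if s ^ 3 = x ^ 3 then (1 : ℕ) else 0)
        = (univ.filter fun s : F => s ^ 3 = x ^ 3).card := (Finset.card_filter _ _).symm
      _ = (univ.filter fun u : F => u ^ 3 = 1).card := by
          apply Finset.card_bij' (fun s _ => s / x) (fun u _ => u * x)
          · intro s hs
            simp only [Finset.mem_filter, Finset.mem_univ, true_and] at hs ⊢
            rw [div_pow, hs, div_self (pow_ne_zero _ hx)]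
          · intro u hu
            simp only [Finset.mem_filter, Finset.mem_univ, true_and] at hu ⊢
            rw [mul_pow, hu, one_mul]
          · intro s _; field_simp
          · intro u _; field_simp
      _ = 3 := cubeRoots h

end aux

/-- If `F` is a finite field with `q` elements and `3 ∣ q − 1`, then the number of
quadruples `(x, y, s, t) ∈ F⁴` with `t·y + x³ − s³ = 0` is exactly `q³ + 2q² − 2q`.
Here `x = v 0`, `y = v 1`, `s = v 2`, `t = v 3`. -/
theorem card_affine_cone_surface (F : Type*) [Field F] [Fintype F]
    (h : 3 ∣ Fintype.card F - 1) :
    Nat.card {v : Fin 4 → F // v 3 * v 1 + v 0 ^ 3 - v 2 ^ 3 = 0} =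
      Fintype.card F ^ 3 + 2 * Fintype.card F ^ 2 - 2 * Fintype.card F := by
  classical
  have e : {v : Fin 4 → F // v 3 * v 1 + v 0 ^ 3 - v 2 ^ 3 = 0} ≃
      {p : F × F × F × F // p.2.2.2 * p.2.1 + p.1 ^ 3 - p.2.2.1 ^ 3 = 0} :=
    { toFun := fun v => ⟨(v.1 0, v.1 1, v.1 2, v.1 3), v.2⟩
      invFun := fun p => ⟨![p.1.1, p.1.2.1, p.1.2.2.1, p.1.2.2.2], by
        simpa using p.2⟩
      left_inv := fun v => Subtype.ext (funext fun i => by fin_cases i <;> rfl)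
      right_inv := fun p => rfl }
  rw [Nat.card_congr e, Nat.card_eq_fintype_card, Fintype.card_subtype]
  rw [Finset.card_filter]
  simp only [Fintype.sum_prod_type]
  have hcond : ∀ x y s t : F, ((t * y + x ^ 3 - s ^ 3 = 0) = (t * y = s ^ 3 - x ^ 3)) :=
    fun x y s t => propext (by constructor <;> intro hh <;> linear_combination hh)
  simp only [hcond]
  have hswap : ∀ x : F, (∑ y : F, ∑ s : F, ∑ t : F,
      if t * y = s ^ 3 - x ^ 3 then 1 else 0) =
      ∑ s : F, ∑ y : F, ∑ t : F, if t * y = s ^ 3 - x ^ 3 then 1 else 0 :=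
    fun x => Finset.sum_comm
  simp only [hswap, sumY]
  have hsub : ∀ x s : F, ((s ^ 3 - x ^ 3 = 0) = (s ^ 3 = x ^ 3)) :=
    fun x s => propext sub_eq_zero
  simp only [hsub, Finset.sum_add_distrib, Finset.sum_const, Finset.card_univ,
    smul_eq_mul, mul_ite, mul_one, mul_zero]
  have hS : ∀ x : F, (∑ s : F, if s ^ 3 = x ^ 3 then Fintype.card F else 0) =
      Fintype.card F * (if x = 0 then 1 else 3) := by
    intro x
    rw [← sumS h x, Finset.mul_sum]
    simp [mul_ite]
  simp only [hS, mul_ite, mul_one]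
  rw [← Finset.add_sum_erase _ _ (Finset.mem_univ (0 : F)), if_pos rfl]
  rw [Finset.sum_congr rfl (fun y hy => by
    rw [if_neg (Finset.mem_erase.mp hy).1]),
    Finset.sum_const, smul_eq_mul, Finset.card_erase_of_mem (Finset.mem_univ _),
    Finset.card_univ]
  have hfin : ∀ q : ℕ, 2 ≤ q →
      q + (q - 1) * (q * 3) + q * (q * (q - 1)) = q ^ 3 + 2 * q ^ 2 - 2 * q := by
    intro q hq2
    obtain ⟨k, rfl⟩ : ∃ k, q = k + 2 := ⟨q - 2, by omega⟩
    have h1 : k + 2 - 1 = k + 1 := rfl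
    have h2 : (k + 2) ^ 3 + 2 * (k + 2) ^ 2 =
        ((k + 2) + (k + 1) * ((k + 2) * 3) + (k + 2) * ((k + 2) * (k + 1))) + 2 * (k + 2) := by
      ring
    rw [h1, h2, Nat.add_sub_cancel]
  exact hfin _ Fintype.one_lt_card
end

section
/- Let F be a finite field with q elements of characteristic different from 2, such that 3 divides q − 1, and let ω ∈ F satisfy ω³ = 1, ω ≠ 1. Then the number of quadruples (x, y, s, t) ∈ F⁴ satisfying y² = x³ − 64s³ + 144ω t² is exactly q³ + 2q² − 2q. (This corresponds to the surface S ⊂ P(2,3,2,3) having q² + 3q + 1 points over F, so that Frobenius acts as multiplication by q on H²(S).) -/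
open Finset

section CardLocalSurfaceHelpers

lemma cls_vec3 {α : Type*} (a b c d : α) : (![a,b,c,d] : Fin 4 → α) 3 = d := rfl

variable {F : Type*} [Field F] [Fintype F] [DecidableEq F]

lemma cls_fiber_card_ne (c : F) (hc : c ≠ 0) :
    Fintype.card {p : F × F // p.1 * p.2 = c} = Fintype.card F - 1 := by
  have e : {p : F × F // p.1 * p.2 = c} ≃ {u : F // u ≠ 0} :=
    { toFun := fun p => ⟨p.1.1, fun h => hc (by rw [← p.2, h, zero_mul])⟩
      invFun := fun u => ⟨(u.1, c / u.1), by
        show u.1 * (c / u.1) = c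
        rw [mul_comm, div_mul_cancel₀ c u.2]⟩
      left_inv := fun p => by
        have h1 : p.1.1 ≠ 0 := fun h => hc (by rw [← p.2, h, zero_mul])
        apply Subtype.ext
        obtain ⟨⟨u, w⟩, hp⟩ := p
        simp only at h1 ⊢
        have hw : c / u = w := by field_simp; linear_combination -hp
        rw [hw]
      right_inv := fun u => rfl }
  rw [Fintype.card_congr e, Fintype.card_congr unitsEquivNeZero.symm, Fintype.card_units]

lemma cls_fiber_card_zero :
    Fintype.card {p : F × F // p.1 * p.2 = (0 : F)} = 2 * Fintype.card F - 1 := by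
  have e : F ⊕ {u : F // u ≠ 0} ≃ {p : F × F // p.1 * p.2 = (0 : F)} :=
    { toFun := fun x => x.elim (fun w => ⟨(0, w), by simp⟩) (fun u => ⟨(u.1, 0), by simp⟩)
      invFun := fun p => if h : p.1.1 = 0 then Sum.inl p.1.2 else Sum.inr ⟨p.1.1, h⟩
      left_inv := fun x => by
        cases x with
        | inl w => simp
        | inr u => simp [u.2]
      right_inv := fun p => by
        by_cases h1 : p.1.1 = 0
        · simp only [h1, dif_pos]
          exact Subtype.ext (Prod.ext h1.symm rfl)
        · have h2 : p.1.2 = 0 := by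
            rcases mul_eq_zero.mp p.2 with h | h
            · exact absurd h h1
            · exact h
          simp only [h1, dif_neg, not_false_iff]
          exact Subtype.ext (Prod.ext rfl h2.symm) }
  have hq : 1 ≤ Fintype.card F := Fintype.card_pos
  rw [← Fintype.card_congr e, Fintype.card_sum,
    Fintype.card_congr (unitsEquivNeZero (G₀ := F)).symm, Fintype.card_units]
  omega

lemma cls_cube_card (ω : F) (hω3 : ω ^ 3 = 1) (hω1 : ω ≠ 1) (c : F) (hc : c ≠ 0) :
    Fintype.card {s : F // s ^ 3 = c ^ 3} = 3 := by
  have h1 : ω ^ 2 + ω + 1 = 0 := by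
    have hfac : (ω - 1) * (ω ^ 2 + ω + 1) = 0 := by linear_combination hω3
    rcases mul_eq_zero.mp hfac with h | h
    · exact absurd (by linear_combination h) hω1
    · exact h
  have hω0 : ω ≠ 0 := by
    intro h
    rw [h] at hω3
    norm_num at hω3
  have hω21 : ω ^ 2 ≠ 1 := by
    intro h
    exact hω1 (by linear_combination hω3 - ω * h)
  have key : ∀ s : F, s ^ 3 = c ^ 3 ↔ s = c ∨ s = ω * c ∨ s = ω ^ 2 * c := by
    intro s
    constructor
    · intro hs
      have hfac : (s - c) * (s - ω * c) * (s - ω ^ 2 * c) = 0 := by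
        linear_combination hs + (c ^ 2 * s - c * s ^ 2) * h1 + (c ^ 2 * s - c ^ 3) * hω3
      rcases mul_eq_zero.mp hfac with h | h
      · rcases mul_eq_zero.mp h with h | h
        · exact Or.inl (by linear_combination h)
        · exact Or.inr (Or.inl (by linear_combination h))
      · exact Or.inr (Or.inr (by linear_combination h))
    · rintro (rfl | rfl | rfl)
      · rfl
      · linear_combination c ^ 3 * hω3
      · linear_combination (ω ^ 3 + 1) * c ^ 3 * hω3
  rw [Fintype.card_subtype]
  have hset : univ.filter (fun s : F => s ^ 3 = c ^ 3) = {c, ω * c, ω ^ 2 * c} := by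
    ext s
    simp [key s]
  rw [hset]
  refine Finset.card_eq_three.mpr ⟨c, ω * c, ω ^ 2 * c, ?_, ?_, ?_, rfl⟩
  · intro h
    have h' : (ω - 1) * c = 0 := by linear_combination -h
    rcases mul_eq_zero.mp h' with h'' | h''
    · exact hω1 (by linear_combination h'')
    · exact hc h''
  · intro h
    have h' : (ω ^ 2 - 1) * c = 0 := by linear_combination -h
    rcases mul_eq_zero.mp h' with h'' | h''
    · exact hω21 (by linear_combination h'')
    · exact hc h''
  · intro h
    have h' : ω * (ω - 1) * c = 0 := by linear_combination -h
    rcases mul_eq_zero.mp h' with h'' | h''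
    · rcases mul_eq_zero.mp h'' with h3 | h3
      · exact hω0 h3
      · exact hω1 (by linear_combination h3)
    · exact hc h''

lemma cls_k_card (h2 : (2 : F) ≠ 0) (ω : F) (hω3 : ω ^ 3 = 1) (hω1 : ω ≠ 1) :
    Fintype.card {p : F × F // p.1 ^ 3 - 64 * p.2 ^ 3 = 0} = 3 * Fintype.card F - 2 := by
  have h64 : (64 : F) ≠ 0 := by
    have h : (64 : F) = 2 ^ 6 := by norm_num
    rw [h]
    exact pow_ne_zero 6 h2
  have h4 : (4 : F) ≠ 0 := by
    have h : (4 : F) = 2 ^ 2 := by norm_num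
    rw [h]
    exact pow_ne_zero 2 h2
  rw [Fintype.card_congr (Equiv.subtypeProdEquivSigmaSubtype
      (fun x s : F => x ^ 3 - 64 * s ^ 3 = 0)), Fintype.card_sigma]
  have hterm : ∀ x : F, Fintype.card {s : F // x ^ 3 - 64 * s ^ 3 = 0}
      = if x = 0 then 1 else 3 := by
    intro x
    by_cases hx : x = 0
    · rw [if_pos hx]
      have e : {s : F // x ^ 3 - 64 * s ^ 3 = 0} ≃ {s : F // s = 0} :=
        Equiv.subtypeEquivRight (by
          intro s
          subst hx
          constructor
          · intro hh
            have h' : (64 : F) * s ^ 3 = 0 := by linear_combination -hh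
            rcases mul_eq_zero.mp h' with h'' | h''
            · exact absurd h'' h64
            · exact pow_eq_zero_iff (by norm_num) |>.mp h''
          · rintro rfl; ring)
      rw [Fintype.card_congr e, Fintype.card_subtype_eq]
    · rw [if_neg hx]
      have hc : x / 4 ≠ 0 := div_ne_zero hx h4
      have e : {s : F // x ^ 3 - 64 * s ^ 3 = 0} ≃ {s : F // s ^ 3 = (x / 4) ^ 3} :=
        Equiv.subtypeEquivRight (by
          intro s
          rw [div_pow]
          constructor
          · intro hh
            have h43 : (4 : F) ^ 3 ≠ 0 := pow_ne_zero 3 h4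
            field_simp
            linear_combination -hh
          · intro hh
            field_simp at hh
            linear_combination -hh)
      rw [Fintype.card_congr e, cls_cube_card ω hω3 hω1 _ hc]
  have hq : 1 ≤ Fintype.card F := Fintype.card_pos
  calc (∑ x : F, Fintype.card {s : F // x ^ 3 - 64 * s ^ 3 = 0})
      = ∑ x : F, (if x = 0 then 1 else 3) :=
        Finset.sum_congr rfl (fun x _ => hterm x)
    _ = 3 * Fintype.card F - 2 := by
        rw [Finset.sum_ite, Finset.sum_const, Finset.sum_const, Finset.filter_eq']
        simp only [Finset.mem_univ, if_true, Finset.card_singleton, smul_eq_mul]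
        rw [Finset.filter_ne', Finset.card_erase_of_mem (Finset.mem_univ _), Finset.card_univ]
        omega

/-- The change of variables `(x, y, s, t) ↦ ((x, s), (y - 12ω²t, y + 12ω²t))`. -/
def cls_e1 {F : Type*} [Field F] (h2 : (2:F) ≠ 0) (h3 : (3:F) ≠ 0)
    (ω : F) (hω3 : ω ^ 3 = 1) :
    {v : Fin 4 → F // v 1 ^ 2 = v 0 ^ 3 - 64 * v 2 ^ 3 + 144 * ω * v 3 ^ 2}
      ≃ {p : (F × F) × F × F // p.2.1 * p.2.2 = p.1.1 ^ 3 - 64 * p.1.2 ^ 3} where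
  toFun v := ⟨((v.1 0, v.1 2),
        (v.1 1 - 12 * ω ^ 2 * v.1 3, v.1 1 + 12 * ω ^ 2 * v.1 3)),
        by linear_combination v.2 - 144 * ω * (v.1 3) ^ 2 * hω3⟩
  invFun p := ⟨![p.1.1.1, (p.1.2.1 + p.1.2.2) / 2, p.1.1.2,
        (p.1.2.2 - p.1.2.1) * ω / 24], by
          obtain ⟨⟨⟨x, s⟩, u, w⟩, hp⟩ := p
          dsimp only at hp ⊢
          simp only [Matrix.cons_val_zero, Matrix.cons_val_one, Matrix.head_cons,
            Matrix.cons_val_two, Matrix.tail_cons, cls_vec3]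
          rw [← hp]
          have h24 : (24 : F) ≠ 0 := by
            have h : (24 : F) = 2 ^ 3 * 3 := by norm_num
            rw [h]; exact mul_ne_zero (pow_ne_zero 3 h2) h3
          field_simp
          ring_nf
          linear_combination (-576 * (u - w)^2) * hω3⟩
  left_inv v := by
    have h24 : (24 : F) ≠ 0 := by
      have h : (24 : F) = 2 ^ 3 * 3 := by norm_num
      rw [h]; exact mul_ne_zero (pow_ne_zero 3 h2) h3
    apply Subtype.ext
    funext i
    fin_cases i
    · simp
    · simp only [Matrix.cons_val_zero, Matrix.cons_val_one, Matrix.head_cons,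
        Matrix.cons_val_two, Matrix.tail_cons, cls_vec3, Fin.reduceFinMk, Fin.isValue]
      field_simp
      ring
    · simp
    · simp only [Matrix.cons_val_zero, Matrix.cons_val_one, Matrix.head_cons,
        Matrix.cons_val_two, Matrix.tail_cons, cls_vec3, Fin.reduceFinMk, Fin.isValue]
      have hv3 : (v : Fin 4 → F) ⟨3, by omega⟩ = v.1 3 := rfl
      field_simp
      linear_combination (24 * v.1 3) * hω3
  right_inv p := by
    have h24 : (24 : F) ≠ 0 := by
      have h : (24 : F) = 2 ^ 3 * 3 := by norm_num
      rw [h]; exact mul_ne_zero (pow_ne_zero 3 h2) h3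
    obtain ⟨⟨⟨x, s⟩, u, w⟩, hp⟩ := p
    apply Subtype.ext
    dsimp only
    simp only [Matrix.cons_val_zero, Matrix.cons_val_one, Matrix.head_cons,
      Matrix.cons_val_two, Matrix.tail_cons, cls_vec3, Prod.mk.injEq]
    refine ⟨trivial, ?_, ?_⟩
    · field_simp
      linear_combination (24 * (u - w)) * hω3
    · field_simp
      linear_combination (24 * (w - u)) * hω3

end CardLocalSurfaceHelpers

/-- If `F` is a finite field with `q` elements, of characteristic `≠ 2`, with `3 ∣ q − 1`,
and `ω ∈ F` is a primitive third root of unity, then the number of quadruples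
`(x, y, s, t) ∈ F⁴` with `y² = x³ − 64s³ + 144ω t²` is exactly `q³ + 2q² − 2q`.
(This corresponds to the surface `S ⊂ P(2,3,2,3)` having `q² + 3q + 1` points over `F`,
so that Frobenius acts as multiplication by `q` on `H²(S)`.)
Here `x = v 0`, `y = v 1`, `s = v 2`, `t = v 3`. -/
theorem card_local_surface (F : Type*) [Field F] [Fintype F]
    (h2 : (2 : F) ≠ 0) (h : 3 ∣ Fintype.card F - 1)
    (ω : F) (hω3 : ω ^ 3 = 1) (hω1 : ω ≠ 1) :
    Nat.card {v : Fin 4 → F // v 1 ^ 2 = v 0 ^ 3 - 64 * v 2 ^ 3 + 144 * ω * v 3 ^ 2} =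
      Fintype.card F ^ 3 + 2 * Fintype.card F ^ 2 - 2 * Fintype.card F := by
  classical
  have h1 : ω ^ 2 + ω + 1 = 0 := by
    have hfac : (ω - 1) * (ω ^ 2 + ω + 1) = 0 := by linear_combination hω3
    rcases mul_eq_zero.mp hfac with hh | hh
    · exact absurd (by linear_combination hh) hω1
    · exact hh
  have h3 : (3 : F) ≠ 0 := by
    intro hh
    refine hω1 ?_
    have hsq : (ω - 1) ^ 2 = 0 := by linear_combination h1 - ω * hh
    have h0 := pow_eq_zero_iff (n := 2) (by norm_num) |>.mp hsq
    linear_combination h0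
  have e2 := Equiv.subtypeProdEquivSigmaSubtype
    (fun (xs : F × F) (uw : F × F) => uw.1 * uw.2 = xs.1 ^ 3 - 64 * xs.2 ^ 3)
  rw [Nat.card_eq_fintype_card, Fintype.card_congr ((cls_e1 h2 h3 ω hω3).trans e2),
    Fintype.card_sigma]
  set q := Fintype.card F with hqdef
  have hq2 : 2 ≤ q := Fintype.one_lt_card
  have hterm : ∀ xs : F × F,
      Fintype.card {uw : F × F // uw.1 * uw.2 = xs.1 ^ 3 - 64 * xs.2 ^ 3}
      = if xs.1 ^ 3 - 64 * xs.2 ^ 3 = 0 then 2 * q - 1 else q - 1 := by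
    intro xs
    by_cases hx : xs.1 ^ 3 - 64 * xs.2 ^ 3 = 0
    · rw [if_pos hx, hx]
      exact cls_fiber_card_zero
    · rw [if_neg hx]
      exact cls_fiber_card_ne _ hx
  rw [Finset.sum_congr rfl (fun xs _ => hterm xs), Finset.sum_ite, Finset.sum_const,
    Finset.sum_const, smul_eq_mul, smul_eq_mul]
  have hk : (univ.filter (fun xs : F × F => xs.1 ^ 3 - 64 * xs.2 ^ 3 = 0)).card
      = 3 * q - 2 := by
    rw [← Fintype.card_subtype]
    exact cls_k_card h2 ω hω3 hω1
  have hsplit : (univ.filter (fun xs : F × F => xs.1 ^ 3 - 64 * xs.2 ^ 3 = 0)).card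
      + (univ.filter (fun xs : F × F => ¬ xs.1 ^ 3 - 64 * xs.2 ^ 3 = 0)).card
      = q ^ 2 := by
    rw [Finset.card_filter_add_card_filter_not, Finset.card_univ, Fintype.card_prod]
    ring
  rw [hk] at hsplit ⊢
  have hk2 : (univ.filter (fun xs : F × F => ¬ xs.1 ^ 3 - 64 * xs.2 ^ 3 = 0)).card
      = q ^ 2 - (3 * q - 2) := by omega
  rw [hk2]
  have hb1 : 2 ≤ 3 * q := by omega
  have hb2 : 3 * q - 2 ≤ q ^ 2 := by nlinarith
  have hb3 : 1 ≤ q := by omega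
  have hb4 : 1 ≤ 2 * q := by omega
  have hb5 : 2 * q ≤ q ^ 3 + 2 * q ^ 2 := by nlinarith
  zify [hb1, hb2, hb3, hb4, hb5]
  ring
end
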